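/- arXiv:2101.04738 — 3 statements merged into one kernel-verified Lean document; each statement's English description precedes it below -/
import Mathlib

section
/- Under Assumption 2, for any horizons N ≥ 0 and M ≥ 0 and any state x ∈ ℝⁿ with ℓ_min(x) ≤ ε, the MPC optimization problem is feasible (V_{N,M}(x) < +∞) and the value function satisfies V_{N,M}(x) ≤ γ_{N+M} · ℓ_min(x), where γ_k := C(1−ρ^k)/(1−ρ). -/
open Finset Filter
open scoped ENNReal

noncomputable section

open scoped Classical

/-- State/input spaces are Euclidean spaces. -/
abbrev Vec (n : ℕ) := EuclideanSpace ℝ (Fin n)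

/-- Open-loop state trajectory: `x(0) = x`, `x(k+1) = f(x(k), u(k))`. -/
def traj {n m : ℕ} (f : Vec n → Vec m → Vec n) (x : Vec n) (u : ℕ → Vec m) : ℕ → Vec n
  | 0 => x
  | k + 1 => f (traj f x u k) (u k)

/-- Closed-loop state trajectory under the feedback `κ` (the map `φ_x(·, x)`). -/
def phiX {n m : ℕ} (f : Vec n → Vec m → Vec n) (κ : Vec n → Vec m) (x : Vec n) : ℕ → Vec n
  | 0 => x
  | k + 1 => f (phiX f κ x k) (κ (phiX f κ x k))

/-- `ℓ_min(x) := inf_{u ∈ U} ℓ(x, u)`. -/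
def lmin {n m : ℕ} (ℓ : Vec n → Vec m → ℝ) (Uset : Set (Vec m)) (x : Vec n) : ℝ :=
  sInf ((fun u => ℓ x u) '' Uset)

/-- Finite-tail cost `V_{f,M}(x)`: sum of the stage cost along the κ-closed loop if the
constraints are satisfied along the tail, and `+∞` otherwise (for `M = 0` it equals `0`). -/
def Vtail {n m : ℕ} (f : Vec n → Vec m → Vec n) (κ : Vec n → Vec m)
    (ℓ : Vec n → Vec m → ℝ) (Z : Set (Vec n × Vec m)) (M : ℕ) (x : Vec n) : ℝ≥0∞ :=
  if ∀ k < M, (phiX f κ x k, κ (phiX f κ x k)) ∈ Z then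
    ENNReal.ofReal (∑ k ∈ Finset.range M, ℓ (phiX f κ x k) (κ (phiX f κ x k)))
  else ⊤

/-- Feasibility of the input sequence `u` over horizon `N` from state `x`. -/
def Feasible {n m : ℕ} (f : Vec n → Vec m → Vec n) (Z : Set (Vec n × Vec m))
    (Uset : Set (Vec m)) (N : ℕ) (x : Vec n) (u : ℕ → Vec m) : Prop :=
  ∀ k < N, u k ∈ Uset ∧ (traj f x u k, u k) ∈ Z

/-- MPC open-loop cost `J_{N,M}` of the input sequence `u` from state `x`. -/
def Jcost {n m : ℕ} (f : Vec n → Vec m → Vec n) (κ : Vec n → Vec m)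
    (ℓ : Vec n → Vec m → ℝ) (Z : Set (Vec n × Vec m)) (N M : ℕ) (x : Vec n)
    (u : ℕ → Vec m) : ℝ≥0∞ :=
  ENNReal.ofReal (∑ k ∈ Finset.range N, ℓ (traj f x u k) (u k)) +
    Vtail f κ ℓ Z M (traj f x u N)

/-- MPC value function `V_{N,M}(x)` (equal to `+∞` if the problem is infeasible). -/
def Vmpc {n m : ℕ} (f : Vec n → Vec m → Vec n) (κ : Vec n → Vec m)
    (ℓ : Vec n → Vec m → ℝ) (Z : Set (Vec n × Vec m)) (Uset : Set (Vec m))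
    (N M : ℕ) (x : Vec n) : ℝ≥0∞ :=
  ⨅ (u : ℕ → Vec m) (_ : Feasible f Z Uset N x u), Jcost f κ ℓ Z N M x u

/-- `u` is a minimizing (optimal) input sequence for `V_{N,M}(x)`. -/
def IsMinimizer {n m : ℕ} (f : Vec n → Vec m → Vec n) (κ : Vec n → Vec m)
    (ℓ : Vec n → Vec m → ℝ) (Z : Set (Vec n × Vec m)) (Uset : Set (Vec m))
    (N M : ℕ) (x : Vec n) (u : ℕ → Vec m) : Prop :=
  Feasible f Z Uset N x u ∧ Vmpc f κ ℓ Z Uset N M x = Jcost f κ ℓ Z N M x u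

/-- Infinite-horizon optimal cost `V_{∞,0}(x)`. -/
def Vinf {n m : ℕ} (f : Vec n → Vec m → Vec n) (ℓ : Vec n → Vec m → ℝ)
    (Z : Set (Vec n × Vec m)) (Uset : Set (Vec m)) (x : Vec n) : ℝ≥0∞ :=
  ⨅ (u : ℕ → Vec m) (_ : ∀ k, u k ∈ Uset ∧ (traj f x u k, u k) ∈ Z),
    ∑' k : ℕ, ENNReal.ofReal (ℓ (traj f x u k) (u k))

/-- Assumption 2 (locally stabilizing controller): exponential decay of the stage
cost along the κ-closed loop and constraint satisfaction, locally (`ℓ_min(x) ≤ ε`). -/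
def Assumption2 {n m : ℕ} (f : Vec n → Vec m → Vec n) (κ : Vec n → Vec m)
    (ℓ : Vec n → Vec m → ℝ) (Z : Set (Vec n × Vec m)) (Uset : Set (Vec m))
    (ρ C ε : ℝ) : Prop :=
  ρ ∈ Set.Ico (0 : ℝ) 1 ∧ 1 ≤ C ∧ 0 < ε ∧
    ∀ x : Vec n, lmin ℓ Uset x ≤ ε → ∀ k : ℕ,
      ℓ (phiX f κ x k) (κ (phiX f κ x k)) ≤ C * ρ ^ k * lmin ℓ Uset x ∧
      (phiX f κ x k, κ (phiX f κ x k)) ∈ Z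

/-- A class-`K∞` function: continuous, strictly increasing and unbounded on `[0,∞)`
with `α(0) = 0`. -/
def IsKInfty (α : ℝ → ℝ) : Prop :=
  ContinuousOn α (Set.Ici 0) ∧ StrictMonoOn α (Set.Ici 0) ∧ α 0 = 0 ∧
    Tendsto α atTop atTop

lemma traj_kappa_eq {n m : ℕ} (f : Vec n → Vec m → Vec n) (κ : Vec n → Vec m)
    (x : Vec n) : ∀ j, traj f x (fun k => κ (phiX f κ x k)) j = phiX f κ x j := by
  intro j
  induction j with
  | zero => rfl
  | succ j ih => simp [traj, phiX, ih]

lemma phiX_add {n m : ℕ} (f : Vec n → Vec m → Vec n) (κ : Vec n → Vec m)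
    (x : Vec n) (N : ℕ) : ∀ k, phiX f κ (phiX f κ x N) k = phiX f κ x (N + k) := by
  intro k
  induction k with
  | zero => rfl
  | succ k ih => simp [phiX, ih]

/-- Proposition 1: under Assumption 2, for any horizons `N, M ≥ 0` and any
state with `ℓ_min(x) ≤ ε`, the MPC problem is feasible (`V_{N,M}(x) < ∞`) and
`V_{N,M}(x) ≤ γ_{N+M} ℓ_min(x)` with `γ_k = C (1 - ρ^k)/(1 - ρ)`. -/
theorem finite_tail_mpc_cost_controllability {n m : ℕ}
    (f : Vec n → Vec m → Vec n) (κ : Vec n → Vec m) (ℓ : Vec n → Vec m → ℝ)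
    (Z : Set (Vec n × Vec m)) (Uset : Set (Vec m)) (ρ C ε : ℝ)
    (hf : Continuous fun p : Vec n × Vec m => f p.1 p.2) (hf0 : f 0 0 = 0)
    (hℓ : Continuous fun p : Vec n × Vec m => ℓ p.1 p.2) (hℓ0 : ∀ x u, 0 ≤ ℓ x u)
    (hZ0 : ((0 : Vec n), (0 : Vec m)) ∈ interior Z) (hU : IsCompact Uset)
    (hκ : Continuous κ) (hκU : ∀ x, κ x ∈ Uset)
    (hA2 : Assumption2 f κ ℓ Z Uset ρ C ε) :
    ∀ (N M : ℕ) (x : Vec n), lmin ℓ Uset x ≤ ε →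
      Vmpc f κ ℓ Z Uset N M x < ⊤ ∧
      Vmpc f κ ℓ Z Uset N M x ≤
        ENNReal.ofReal (C * (1 - ρ ^ (N + M)) / (1 - ρ) * lmin ℓ Uset x) := by
  obtain ⟨⟨hρ0, hρ1⟩, hC, hε, hdecay⟩ := hA2
  intro N M x hx
  set L := lmin ℓ Uset x with hL
  have hL0 : 0 ≤ L := Real.sInf_nonneg (by rintro _ ⟨u, -, rfl⟩; exact hℓ0 x u)
  set u : ℕ → Vec m := fun k => κ (phiX f κ x k) with hu
  have htraj : ∀ j, traj f x u j = phiX f κ x j := traj_kappa_eq f κ x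
  have hfeas : Feasible f Z Uset N x u := by
    intro k hk
    refine ⟨hκU _, ?_⟩
    rw [htraj k]
    exact (hdecay x hx k).2
  have hZtail : ∀ k < M, (phiX f κ (traj f x u N) k,
      κ (phiX f κ (traj f x u N) k)) ∈ Z := by
    intro k hk
    rw [htraj N, phiX_add]
    exact (hdecay x hx (N + k)).2
  have hsum : ∀ K : ℕ, ∑ k ∈ Finset.range K, C * ρ ^ k * L
      = C * (1 - ρ ^ K) / (1 - ρ) * L := by
    intro K
    have hρne : ρ ≠ 1 := ne_of_lt hρ1
    have h1 : (1 : ℝ) - ρ ≠ 0 := sub_ne_zero.mpr (Ne.symm hρne)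
    have h2 : ρ - 1 ≠ 0 := sub_ne_zero.mpr hρne
    rw [← Finset.sum_mul, ← Finset.mul_sum, geom_sum_eq hρne]
    field_simp
    ring
  have hJ : Jcost f κ ℓ Z N M x u ≤
      ENNReal.ofReal (C * (1 - ρ ^ (N + M)) / (1 - ρ) * L) := by
    rw [Jcost, Vtail, if_pos hZtail, ← ENNReal.ofReal_add
      (Finset.sum_nonneg fun k _ => hℓ0 _ _) (Finset.sum_nonneg fun k _ => hℓ0 _ _)]
    apply ENNReal.ofReal_le_ofReal
    rw [← hsum (N + M), Finset.sum_range_add]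
    apply add_le_add
    · apply Finset.sum_le_sum
      intro k hk
      rw [htraj k]
      exact (hdecay x hx k).1
    · apply Finset.sum_le_sum
      intro k hk
      rw [htraj N, phiX_add]
      exact (hdecay x hx (N + k)).1
  have hV : Vmpc f κ ℓ Z Uset N M x ≤ Jcost f κ ℓ Z N M x u := by
    exact iInf₂_le u hfeas
  refine ⟨lt_of_le_of_lt (hV.trans hJ) ENNReal.ofReal_lt_top, hV.trans hJ⟩
end
end

section
/- Let ρ ∈ (0,1), C > 0, and M ≥ 1. If ℓ_0, …, ℓ_M are nonnegative real numbers satisfying ℓ_M ≤ C ρ^{M−k} ℓ_k for every k ∈ {0, …, M−1}, then ℓ_M ≤ (C ρ^M (1−ρ)/(1−ρ^M)) · Σ_{k=0}^{M−1} ℓ_k. -/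
open Finset Filter
open scoped ENNReal

noncomputable section

open scoped Classical

/-- analytic solution of LP (6): if `ℓ_0, …, ℓ_M ≥ 0` satisfy
`ℓ_M ≤ C ρ^(M-k) ℓ_k` for all `k < M`, then
`ℓ_M ≤ (C ρ^M (1-ρ)/(1-ρ^M)) Σ_{k<M} ℓ_k`. -/
theorem lp_tail_bound (ρ C : ℝ) (hρ : ρ ∈ Set.Ioo (0 : ℝ) 1) (hC : 0 < C)
    (M : ℕ) (hM : 1 ≤ M) (l : ℕ → ℝ) (hl : ∀ k ≤ M, 0 ≤ l k)
    (hcon : ∀ k < M, l M ≤ C * ρ ^ (M - k) * l k) :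
    l M ≤ C * ρ ^ M * (1 - ρ) / (1 - ρ ^ M) * ∑ k ∈ Finset.range M, l k := by
  obtain ⟨hρ0, hρ1⟩ := hρ
  have hρM : ρ ^ M < 1 := pow_lt_one₀ hρ0.le hρ1 (by omega)
  have h1ρ : (0:ℝ) < 1 - ρ := by linarith
  have h1ρM : (0:ℝ) < 1 - ρ ^ M := by linarith
  have key : ∀ k ∈ Finset.range M, l M * ρ ^ k ≤ C * ρ ^ M * l k := by
    intro k hk
    rw [Finset.mem_range] at hk
    have hρk : (0:ℝ) ≤ ρ ^ k := (pow_pos hρ0 k).le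
    have hpow : ρ ^ (M - k) * ρ ^ k = ρ ^ M := by
      rw [← pow_add]; congr 1; omega
    calc l M * ρ ^ k ≤ C * ρ ^ (M - k) * l k * ρ ^ k :=
          mul_le_mul_of_nonneg_right (hcon k hk) hρk
      _ = C * ρ ^ M * l k := by rw [← hpow]; ring
  have hsum := Finset.sum_le_sum key
  rw [← Finset.mul_sum, ← Finset.mul_sum] at hsum
  have hgeom : ∑ k ∈ Finset.range M, ρ ^ k = (1 - ρ ^ M) / (1 - ρ) := by
    rw [geom_sum_eq hρ1.ne, div_eq_div_iff (by linarith) (by linarith)]; ring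
  rw [hgeom] at hsum
  rw [div_mul_eq_mul_div, le_div_iff₀ h1ρM]
  have h2 := mul_le_mul_of_nonneg_right hsum h1ρ.le
  rw [mul_assoc, div_mul_cancel₀ _ h1ρ.ne'] at h2
  calc l M * (1 - ρ ^ M) ≤ C * ρ ^ M * (∑ i ∈ Finset.range M, l i) * (1 - ρ) := h2
    _ = C * ρ ^ M * (1 - ρ) * ∑ k ∈ Finset.range M, l k := by ring
end
end

section
/- Under Assumption 2, let M ≥ 1 satisfy C ρ^M < 1 (equivalently M > log(C)/log(1/ρ) when ρ > 0), and set α_M := 1 − C ρ^M > 0. Then for any x ∈ ℝⁿ with ℓ_min(x) ≤ ε, the finite-tail cost is a local relaxed control Lyapunov function: V_{f,M}(f(x, κ(x))) ≤ V_{f,M}(x) − α_M · ℓ_κ(x). -/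
open Finset Filter
open scoped ENNReal

noncomputable section

open scoped Classical

lemma phiX_shift {n m : ℕ} (f : Vec n → Vec m → Vec n) (κ : Vec n → Vec m) (x : Vec n) :
    ∀ k, phiX f κ (f x (κ x)) k = phiX f κ x (k+1)
  | 0 => rfl
  | k+1 => by rw [phiX, phiX_shift f κ x k]; rfl

/-- under Assumption 2, if `M ≥ 1` with `C ρ^M < 1` and `α_M := 1 - C ρ^M`,
then for any `x` with `ℓ_min(x) ≤ ε` the finite-tail cost is a local relaxed CLF:
`V_{f,M}(f(x, κ(x))) ≤ V_{f,M}(x) - α_M ℓ_κ(x)`. -/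
theorem finite_tail_cost_relaxed_CLF {n m : ℕ}
    (f : Vec n → Vec m → Vec n) (κ : Vec n → Vec m) (ℓ : Vec n → Vec m → ℝ)
    (Z : Set (Vec n × Vec m)) (Uset : Set (Vec m)) (ρ C ε : ℝ)
    (hf : Continuous fun p : Vec n × Vec m => f p.1 p.2)
    (hℓ : Continuous fun p : Vec n × Vec m => ℓ p.1 p.2) (hℓ0 : ∀ x u, 0 ≤ ℓ x u)
    (hU : IsCompact Uset) (hκ : Continuous κ) (hκU : ∀ x, κ x ∈ Uset)
    (hA2 : Assumption2 f κ ℓ Z Uset ρ C ε)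
    (M : ℕ) (hM : 1 ≤ M) (hCρ : C * ρ ^ M < 1) :
    ∀ x : Vec n, lmin ℓ Uset x ≤ ε →
      Vtail f κ ℓ Z M (f x (κ x)) + ENNReal.ofReal ((1 - C * ρ ^ M) * ℓ x (κ x)) ≤
        Vtail f κ ℓ Z M x := by
  intro x hx
  obtain ⟨hρ, hC, hε, hdec⟩ := hA2
  have hZ : ∀ k, (phiX f κ x k, κ (phiX f κ x k)) ∈ Z := fun k => (hdec x hx k).2
  set g : ℕ → ℝ := fun k => ℓ (phiX f κ x k) (κ (phiX f κ x k)) with hg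
  have hgnn : ∀ k, 0 ≤ g k := fun k => hℓ0 _ _
  have hlmin_le : lmin ℓ Uset x ≤ ℓ x (κ x) := by
    apply csInf_le
    · exact ⟨0, fun y ⟨u, _, hu⟩ => hu ▸ hℓ0 x u⟩
    · exact ⟨κ x, hκU x, rfl⟩
  have hCρ0 : 0 ≤ C * ρ ^ M := mul_nonneg (le_trans zero_le_one hC) (pow_nonneg hρ.1 M)
  have hgM : g M ≤ C * ρ ^ M * ℓ x (κ x) :=
    le_trans (hdec x hx M).1 (mul_le_mul_of_nonneg_left hlmin_le hCρ0)
  have hVx : Vtail f κ ℓ Z M x = ENNReal.ofReal (∑ k ∈ Finset.range M, g k) := by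
    rw [Vtail, if_pos (fun k _ => hZ k)]
  have hVx' : Vtail f κ ℓ Z M (f x (κ x))
      = ENNReal.ofReal (∑ k ∈ Finset.range M, g (k+1)) := by
    have hc : ∀ k < M, (phiX f κ (f x (κ x)) k, κ (phiX f κ (f x (κ x)) k)) ∈ Z := by
      intro k _; rw [phiX_shift]; exact hZ (k+1)
    simp only [Vtail, if_pos hc]
    congr 1
    exact Finset.sum_congr rfl fun k _ => by rw [hg]; simp [phiX_shift]
  rw [hVx, hVx']
  rw [← ENNReal.ofReal_add (Finset.sum_nonneg fun k _ => hgnn (k+1))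
    (mul_nonneg (by linarith) (hℓ0 x (κ x)))]
  apply ENNReal.ofReal_le_ofReal
  have h1 : ∑ k ∈ Finset.range (M+1), g k = ∑ k ∈ Finset.range M, g (k+1) + g 0 :=
    Finset.sum_range_succ' g M
  have h2 : ∑ k ∈ Finset.range (M+1), g k = ∑ k ∈ Finset.range M, g k + g M :=
    Finset.sum_range_succ g M
  have hg0 : g 0 = ℓ x (κ x) := rfl
  nlinarith [hgM, h1, h2, hg0]
end
end
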